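/- Let A be a Noetherian commutative ring, ϖ ∈ A a non-zero-divisor and non-unit, and assume A is integrally closed in the localization A[ϖ⁻¹]. Then every associated prime ideal of the ideal (ϖ) in A has height 1. -/

import Mathlib

/-- A prime ideal of height one: a prime which is not a minimal prime of the ring, such
that every prime strictly below it is a minimal prime of the ring. -/
def IsHeightOne {A : Type*} [CommRing A] (𝔭 : Ideal A) : Prop :=
  𝔭.IsPrime ∧ 𝔭 ∉ minimalPrimes A ∧
    ∀ 𝔮 : Ideal A, 𝔮.IsPrime → 𝔮 < 𝔭 → 𝔮 ∈ minimalPrimes A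

/-- Let `A` be a Noetherian commutative ring and `ϖ ∈ A` a non-zero-divisor and non-unit
such that `A` is integrally closed in `A[ϖ⁻¹]`.  Then every associated prime ideal of the
ideal `(ϖ)` (a prime of the form `(ϖ) :_A f`) has height one. -/
theorem associatedPrime_heightOne_of_noetherian {A : Type*} [CommRing A]
    [IsNoetherianRing A] (ϖ : A) (hϖ : ϖ ∈ nonZeroDivisors A) (hnu : ¬IsUnit ϖ)
    (hic : ∀ x : Localization.Away ϖ, IsIntegral A x →
      ∃ a : A, x = algebraMap A (Localization.Away ϖ) a)
    (𝔭 : Ideal A) (hp : 𝔭.IsPrime) (f : A)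
    (hass : 𝔭 = (Ideal.span {ϖ}).colon (Ideal.span {f})) :
    IsHeightOne 𝔭 := by
  haveI := hp
  have hπp : ϖ ∈ 𝔭 := by
    rw [hass, Ideal.mem_colon_span_singleton]
    exact Ideal.mem_span_singleton.mpr ⟨f, rfl⟩
  -- `𝔭` is not a minimal prime, since it contains the non-zero-divisor `ϖ`.
  have hnotmin : 𝔭 ∉ minimalPrimes A := by
    intro hmin
    set R := Localization.AtPrime 𝔭
    have hnil : algebraMap A R ϖ ∈ nilradical R := by
      rw [nilradical_eq_sInf]
      refine Ideal.mem_sInf.mpr ?_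
      intro P hP
      haveI : P.IsPrime := hP
      have hcomap : Ideal.comap (algebraMap A R) P ≤ 𝔭 := by
        intro s hs
        by_contra hs'
        exact hP.ne_top (Ideal.eq_top_of_isUnit_mem _ hs
          (IsLocalization.map_units R (⟨s, hs'⟩ : 𝔭.primeCompl)))
      have h𝔭le : 𝔭 ≤ Ideal.comap (algebraMap A R) P :=
        hmin.2 ⟨hP.comap _, bot_le⟩ hcomap
      exact h𝔭le hπp
    obtain ⟨k, hk⟩ := hnil
    rw [← map_pow] at hk
    obtain ⟨⟨s, hs⟩, hsk⟩ := (IsLocalization.map_eq_zero_iff 𝔭.primeCompl R _).mp hk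
    have : s = 0 := mem_nonZeroDivisors_iff_right.mp (pow_mem hϖ k) s hsk
    exact hs (this ▸ 𝔭.zero_mem)
  refine ⟨hp, hnotmin, ?_⟩
  intro 𝔮 h𝔮 hlt
  by_cases hcase : ∀ r ∈ 𝔭, ∃ s ∈ 𝔭, f * r = ϖ * s
  · -- In this case `f/ϖ` is integral over `A`, hence in `A`, so `𝔭 = ⊤`, contradiction.
    exfalso
    set B := Localization.Away ϖ
    have hple : Submonoid.powers ϖ ≤ nonZeroDivisors A := Submonoid.powers_le.mpr hϖ
    have hinj : Function.Injective (algebraMap A B) := IsLocalization.injective B hple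
    set x : B := IsLocalization.mk' B f (⟨ϖ, Submonoid.mem_powers ϖ⟩ : Submonoid.powers ϖ)
      with hx
    have hkey : ∀ r ∈ 𝔭, ∃ s ∈ 𝔭, x * algebraMap A B r = algebraMap A B s := by
      intro r hr
      obtain ⟨s, hs, hfr⟩ := hcase r hr
      refine ⟨s, hs, ?_⟩
      rw [hx, mul_comm, IsLocalization.mul_mk'_eq_mk'_of_mul,
        IsLocalization.mk'_eq_iff_eq_mul, ← map_mul]
      exact congrArg _ (by rw [mul_comm r f, hfr, mul_comm])
    have hpow : ∀ n : ℕ, ∃ s ∈ 𝔭, x ^ n * algebraMap A B ϖ = algebraMap A B s := by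
      intro n
      induction n with
      | zero => exact ⟨ϖ, hπp, by simp⟩
      | succ n ih =>
        obtain ⟨s, hs, heq⟩ := ih
        obtain ⟨s', hs', h'⟩ := hkey s hs
        exact ⟨s', hs', by rw [pow_succ', mul_assoc, heq, h']⟩
    set P : Submodule A B :=
      Submodule.span A {IsLocalization.Away.invSelf (S := B) ϖ} with hP
    have hxP : ∀ n : ℕ, x ^ n ∈ P := by
      intro n
      obtain ⟨s, hs, heq⟩ := hpow n
      have h1 : algebraMap A B ϖ * IsLocalization.Away.invSelf (S := B) ϖ = 1 :=
        IsLocalization.Away.mul_invSelf ϖ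
      have : x ^ n = s • IsLocalization.Away.invSelf (S := B) ϖ := by
        rw [Algebra.smul_def, ← heq, mul_assoc, h1, mul_one]
      rw [this]
      exact Submodule.smul_mem _ _ (Submodule.mem_span_singleton_self _)
    have hint : IsIntegral A x := by
      refine isIntegral_of_submodule_noetherian (Algebra.adjoin A {x}) ?_ x
        (Algebra.self_mem_adjoin_singleton A x)
      haveI hPn : IsNoetherian A P :=
        isNoetherian_of_fg_of_noetherian _ (Submodule.fg_span (Set.finite_singleton _))
      refine isNoetherian_of_le (?_ : Subalgebra.toSubmodule _ ≤ P)
      rw [Algebra.adjoin_eq_span]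
      refine Submodule.span_le.mpr ?_
      rintro y hy
      obtain ⟨n, rfl⟩ := Submonoid.mem_closure_singleton.mp hy
      exact hxP n
    obtain ⟨a, ha⟩ := hic x hint
    have hfa : algebraMap A B f = algebraMap A B (a * ϖ) := by
      have h2 := IsLocalization.mk'_eq_iff_eq_mul.mp (hx.symm.trans ha)
      rwa [← map_mul] at h2
    have hf : f = a * ϖ := hinj hfa
    have h1 : (1 : A) ∈ 𝔭 := by
      rw [hass, Ideal.mem_colon_span_singleton, one_mul]
      exact Ideal.mem_span_singleton.mpr ⟨a, by rw [hf, mul_comm]⟩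
    exact hp.ne_top ((Ideal.eq_top_iff_one _).mpr h1)
  · push_neg at hcase
    obtain ⟨q₀, hq₀p, hq₀⟩ := hcase
    have hfq : f * q₀ ∈ Ideal.span {ϖ} := by
      have h := hass ▸ hq₀p
      rw [Ideal.mem_colon_span_singleton] at h
      rwa [mul_comm]
    obtain ⟨g, hg_eq⟩ := Ideal.mem_span_singleton.mp hfq
    have hg : g ∉ 𝔭 := fun h => hq₀ g h hg_eq
    -- key divisibility: `g • 𝔭 ⊆ (q₀)`
    have hgp : ∀ r ∈ 𝔭, ∃ h : A, g * r = q₀ * h := by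
      intro r hr
      have h := hass ▸ hr
      rw [Ideal.mem_colon_span_singleton] at h
      obtain ⟨h', hh'⟩ := Ideal.mem_span_singleton.mp h
      refine ⟨h', ?_⟩
      have : (g * r) * ϖ = (q₀ * h') * ϖ := by
        calc (g * r) * ϖ = (ϖ * g) * r := by ring
        _ = (f * q₀) * r := by rw [← hg_eq]
        _ = q₀ * (r * f) := by ring
        _ = q₀ * (ϖ * h') := by rw [hh']
        _ = (q₀ * h') * ϖ := by ring
      exact mul_cancel_right_mem_nonZeroDivisors hϖ |>.mp this
    -- `q₀ ∉ 𝔮`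
    have hq₀𝔮 : q₀ ∉ 𝔮 := by
      intro hq₀𝔮
      refine hlt.ne ?_
      refine le_antisymm hlt.le ?_
      intro r hr
      obtain ⟨h, hh⟩ := hgp r hr
      have : g * r ∈ 𝔮 := hh ▸ 𝔮.mul_mem_right h hq₀𝔮
      rcases h𝔮.mem_or_mem this with h1 | h1
      · exact absurd (hlt.le h1) hg
      · exact h1
    -- now pass to the localization at `𝔭`
    set R := Localization.AtPrime 𝔭
    haveI : IsNoetherianRing R :=
      IsLocalization.isNoetherianRing 𝔭.primeCompl R inferInstance
    have hdisj : Disjoint (𝔭.primeCompl : Set A) (𝔮 : Set A) := by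
      rw [Set.disjoint_left]
      intro s hs hs'
      exact hs (hlt.le hs')
    haveI hQprime : (Ideal.map (algebraMap A R) 𝔮).IsPrime :=
      IsLocalization.isPrime_of_isPrime_disjoint 𝔭.primeCompl R 𝔮 h𝔮 hdisj
    have ht_not : algebraMap A R q₀ ∉ Ideal.map (algebraMap A R) 𝔮 := by
      intro h
      have := IsLocalization.under_map_of_isPrime_disjoint 𝔭.primeCompl R h𝔮 hdisj
      exact hq₀𝔮 (this ▸ Ideal.mem_comap.mpr h)
    have hspan : Ideal.map (algebraMap A R) 𝔭 ≤ Ideal.span {algebraMap A R q₀} := by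
      intro z hz
      obtain ⟨⟨⟨r, hr⟩, ⟨s, hs⟩⟩, hzs⟩ :=
        (IsLocalization.mem_map_algebraMap_iff 𝔭.primeCompl R).mp hz
      simp only at hzs
      obtain ⟨h, hh⟩ := hgp r hr
      have hunit : IsUnit (algebraMap A R (s * g)) :=
        IsLocalization.map_units R (⟨s * g, 𝔭.primeCompl.mul_mem hs hg⟩ : 𝔭.primeCompl)
      rw [← Ideal.unit_mul_mem_iff_mem _ hunit]
      have : algebraMap A R (s * g) * z = algebraMap A R q₀ * algebraMap A R h := by
        rw [map_mul, mul_comm (algebraMap A R s) (algebraMap A R g), mul_assoc,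
          mul_comm (algebraMap A R s) z, hzs, ← map_mul, hh, map_mul]
      rw [this]
      exact Ideal.mem_span_singleton.mpr ⟨algebraMap A R h, rfl⟩
    have hpow : ∀ n : ℕ, Ideal.map (algebraMap A R) 𝔮 ≤ (Ideal.map (algebraMap A R) 𝔭) ^ n := by
      intro n
      induction n with
      | zero => simp
      | succ n ih =>
        intro z hz
        have hz' : z ∈ Ideal.span {algebraMap A R q₀} :=
          hspan (Ideal.map_mono hlt.le hz)
        obtain ⟨y, hy⟩ := Ideal.mem_span_singleton.mp hz'
        have hy𝔮 : y ∈ Ideal.map (algebraMap A R) 𝔮 := by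
          rcases hQprime.mem_or_mem (hy ▸ hz) with h1 | h1
          · exact absurd h1 ht_not
          · exact h1
        rw [hy, pow_succ']
        exact Ideal.mul_mem_mul (Ideal.mem_map_of_mem _ hq₀p) (ih hy𝔮)
    have hbot : Ideal.map (algebraMap A R) 𝔮 = ⊥ := by
      have h1 : Ideal.map (algebraMap A R) 𝔮 ≤ ⨅ n : ℕ, (Ideal.map (algebraMap A R) 𝔭) ^ n :=
        le_iInf hpow
      rw [Localization.AtPrime.map_eq_maximalIdeal,
        Ideal.iInf_pow_eq_bot_of_isLocalRing _
          (IsLocalRing.maximalIdeal.isMaximal R).ne_top, le_bot_iff] at h1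
      exact h1
    -- conclude `𝔮` is a minimal prime
    refine ⟨⟨h𝔮, bot_le⟩, ?_⟩
    rintro J ⟨hJ, -⟩ hJle
    intro y hy
    have : algebraMap A R y = 0 := by
      have h := Ideal.mem_map_of_mem (algebraMap A R) hy
      rw [hbot] at h
      exact (Submodule.mem_bot _).mp h
    obtain ⟨⟨s, hs⟩, hsy⟩ := (IsLocalization.map_eq_zero_iff 𝔭.primeCompl R y).mp this
    have hsyJ : s * y ∈ J := by
      rw [hsy]; exact J.zero_mem
    rcases hJ.mem_or_mem hsyJ with h1 | h1
    · exact absurd (hlt.le (hJle h1)) hs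
    · exact h1
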